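/- Let S be a multiplicatively closed set of monomials in an affine semigroup ring k[Q], and let NF be the minimal face of Q containing the exponent vectors of elements of S. Then the localization S^{-1} k[Q] is isomorphic to k[Q - NF]. -/

import Mathlib

set_option synthInstance.maxHeartbeats 800000
set_option maxHeartbeats 1600000

/-!
STATEMENT 2: Let S be a multiplicatively closed set of monomials in an affine
semigroup ring k[Q], and let ℕF be the minimal face of Q containing the exponent
vectors of elements of S. Then the localization S⁻¹ k[Q] is isomorphic to k[Q - ℕF].
-/

open scoped BigOperators

noncomputable section

def IsFace {d : ℕ} (Q F : AddSubmonoid (Fin d → ℤ)) : Prop :=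
  F ≤ Q ∧ ∀ a b : Fin d → ℤ, a ∈ Q → b ∈ Q → (a + b ∈ F ↔ a ∈ F ∧ b ∈ F)

def locSemigroup {d : ℕ} (Q F : AddSubmonoid (Fin d → ℤ)) : AddSubmonoid (Fin d → ℤ) where
  carrier := {x | ∃ q ∈ Q, ∃ f ∈ F, x = q - f}
  zero_mem' := ⟨0, Q.zero_mem, 0, F.zero_mem, by simp⟩
  add_mem' := by
    rintro a b ⟨q1, hq1, f1, hf1, rfl⟩ ⟨q2, hq2, f2, hf2, rfl⟩
    exact ⟨q1 + q2, Q.add_mem hq1 hq2, f1 + f2, F.add_mem hf1 hf2, by abel⟩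

theorem localization_of_affine_semigroup_ring_at_monomials
    {d : ℕ} (k : Type) [Field k] (A : Finset (Fin d → ℤ)) (h0 : (0 : Fin d → ℤ) ∉ A)
    -- the affine semigroup Q = ℕA
    (Q : AddSubmonoid (Fin d → ℤ)) (hQ : Q = AddSubmonoid.closure (A : Set (Fin d → ℤ)))
    -- S is a multiplicatively closed set of monomials in k[Q]
    (S : Submonoid (AddMonoidAlgebra k Q))
    (hSmon : ∀ s ∈ S, ∃ q : Q, s = AddMonoidAlgebra.single q (1 : k))
    -- ℕF is the minimal face of Q containing the exponent vectors of elements of S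
    (F : AddSubmonoid (Fin d → ℤ)) (hF : IsFace Q F)
    (hFcont : ∀ q : Q, (AddMonoidAlgebra.single q (1 : k)) ∈ S → (q : Fin d → ℤ) ∈ F)
    (hFmin : ∀ F' : AddSubmonoid (Fin d → ℤ), IsFace Q F' →
      (∀ q : Q, (AddMonoidAlgebra.single q (1 : k)) ∈ S → (q : Fin d → ℤ) ∈ F') → F ≤ F') :
    Nonempty (Localization S ≃+* AddMonoidAlgebra k (locSemigroup Q F)) := by
  classical
  set L := locSemigroup Q F with hLdef
  have hQle : Q ≤ L := fun x hx => ⟨x, hx, 0, F.zero_mem, by simp⟩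
  -- The face F₀ generated by the exponents of S
  let F0 : AddSubmonoid (Fin d → ℤ) :=
  { carrier := {x | x ∈ Q ∧ ∃ y ∈ Q, ∃ h : x + y ∈ Q,
      AddMonoidAlgebra.single (⟨x + y, h⟩ : Q) (1 : k) ∈ S}
    zero_mem' := by
      refine ⟨Q.zero_mem, 0, Q.zero_mem, by simpa using Q.zero_mem, ?_⟩
      have h1 : (⟨(0 : Fin d → ℤ) + 0, by simpa using Q.zero_mem⟩ : Q) = 0 :=
        Subtype.ext (by simp)
      rw [h1, ← AddMonoidAlgebra.one_def]
      exact S.one_mem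
    add_mem' := by
      rintro a b ⟨haQ, ya, hya, ha, hsa⟩ ⟨hbQ, yb, hyb, hb, hsb⟩
      have hab : a + b + (ya + yb) ∈ Q := by
        have he : a + b + (ya + yb) = (a + ya) + (b + yb) := by abel
        rw [he]; exact Q.add_mem ha hb
      refine ⟨Q.add_mem haQ hbQ, ya + yb, Q.add_mem hya hyb, hab, ?_⟩
      have h2 : (⟨a + b + (ya + yb), hab⟩ : Q)
          = (⟨a + ya, ha⟩ : Q) + (⟨b + yb, hb⟩ : Q) := Subtype.ext (by
        show a + b + (ya + yb) = (a + ya) + (b + yb); abel)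
      rw [h2, ← one_mul (1 : k), ← AddMonoidAlgebra.single_mul_single]
      exact S.mul_mem hsa hsb }
  have hF0face : IsFace Q F0 := by
    constructor
    · intro x hx; exact hx.1
    · intro a b haQ hbQ
      constructor
      · rintro ⟨-, y, hy, h, hs⟩
        constructor
        · have hab : a + (b + y) ∈ Q := by
            have he : a + (b + y) = a + b + y := by abel
            rw [he]; exact h
          refine ⟨haQ, b + y, Q.add_mem hbQ hy, hab, ?_⟩
          have h2 : (⟨a + (b + y), hab⟩ : Q) = (⟨a + b + y, h⟩ : Q) :=
            Subtype.ext (by show a + (b + y) = a + b + y; abel)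
          rw [h2]; exact hs
        · have hab : b + (a + y) ∈ Q := by
            have he : b + (a + y) = a + b + y := by abel
            rw [he]; exact h
          refine ⟨hbQ, a + y, Q.add_mem haQ hy, hab, ?_⟩
          have h2 : (⟨b + (a + y), hab⟩ : Q) = (⟨a + b + y, h⟩ : Q) :=
            Subtype.ext (by show b + (a + y) = a + b + y; abel)
          rw [h2]; exact hs
      · rintro ⟨ha, hb⟩; exact F0.add_mem ha hb
  have hF0cont : ∀ q : Q, (AddMonoidAlgebra.single q (1 : k)) ∈ S →
      (q : Fin d → ℤ) ∈ F0 := by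
    intro q hq
    have hq0 : (q : Fin d → ℤ) + 0 ∈ Q := by simpa using q.2
    refine ⟨q.2, 0, Q.zero_mem, hq0, ?_⟩
    have h2 : (⟨(q : Fin d → ℤ) + 0, hq0⟩ : Q) = q := Subtype.ext (by simp)
    rw [h2]; exact hq
  -- every element of F has a "witness" making it invertible after localization
  have hFwit : ∀ f ∈ F, ∃ y ∈ Q, ∃ h : f + y ∈ Q,
      AddMonoidAlgebra.single (⟨f + y, h⟩ : Q) (1 : k) ∈ S := by
    intro f hf
    exact (hFmin F0 hF0face hF0cont hf).2
  -- the inclusion of semigroups and the induced ring hom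
  let ι : Q →+ L :=
  { toFun := fun x => ⟨x.1, hQle x.2⟩
    map_zero' := rfl
    map_add' := fun _ _ => rfl }
  have hιinj : Function.Injective ι := by
    intro a b h
    have : ((ι a : L) : Fin d → ℤ) = ((ι b : L) : Fin d → ℤ) := congrArg Subtype.val h
    exact Subtype.ext this
  let φ : AddMonoidAlgebra k Q →+* AddMonoidAlgebra k L :=
    AddMonoidAlgebra.mapDomainRingHom k ι
  have hφsingle : ∀ (q : Q) (c : k),
      φ (AddMonoidAlgebra.single q c) = AddMonoidAlgebra.single (ι q) c := by
    intro q c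
    simp [φ, AddMonoidAlgebra.mapDomainRingHom_apply, Finsupp.mapDomain_single]
  have hφinj : Function.Injective φ := AddMonoidAlgebra.mapDomain_injective hιinj
  letI : Algebra (AddMonoidAlgebra k Q) (AddMonoidAlgebra k L) := φ.toAlgebra
  have halg : (algebraMap (AddMonoidAlgebra k Q) (AddMonoidAlgebra k L)) = φ := rfl
  haveI : IsLocalization S (AddMonoidAlgebra k L) := by
    refine ⟨⟨?_, ?_, ?_⟩⟩
    · -- map_units'
      rintro ⟨s, hs⟩
      obtain ⟨q, rfl⟩ := hSmon s hs
      have hqF : (q : Fin d → ℤ) ∈ F := hFcont q hs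
      rw [isUnit_iff_exists_inv]
      refine ⟨AddMonoidAlgebra.single
        (⟨-(q : Fin d → ℤ), 0, Q.zero_mem, q, hqF, by simp⟩ : L) (1 : k), ?_⟩
      rw [halg, hφsingle, AddMonoidAlgebra.single_mul_single, one_mul]
      have h0 : ι q + (⟨-(q : Fin d → ℤ), 0, Q.zero_mem, q, hqF, by simp⟩ : L) = 0 :=
        Subtype.ext (by show (q : Fin d → ℤ) + -(q : Fin d → ℤ) = 0; abel)
      rw [h0, ← AddMonoidAlgebra.one_def]
    · -- surj'
      intro z
      induction z using AddMonoidAlgebra.induction with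
      | zero =>
        exact ⟨⟨0, 1⟩, by simp⟩
      | single_add a c g _ _ ih =>
        obtain ⟨⟨x2, s2⟩, h2⟩ := ih
        obtain ⟨q, hq, f, hf, hval⟩ := a.2
        obtain ⟨y, hy, hQ', hsw⟩ := hFwit f hf
        refine ⟨⟨AddMonoidAlgebra.single (⟨q + y, Q.add_mem hq hy⟩ : Q) c * (s2 : AddMonoidAlgebra k Q)
            + x2 * AddMonoidAlgebra.single (⟨f + y, hQ'⟩ : Q) (1 : k),
            ⟨AddMonoidAlgebra.single (⟨f + y, hQ'⟩ : Q) (1 : k), hsw⟩ * s2⟩, ?_⟩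
        dsimp only at h2 ⊢
        rw [halg] at h2 ⊢
        set G : AddMonoidAlgebra k ↥L := g with hG
        set w : AddMonoidAlgebra k ↥L := AddMonoidAlgebra.single a c with hw
        simp only [Submonoid.coe_mul, map_mul, map_add]
        set u := φ (AddMonoidAlgebra.single (⟨f + y, hQ'⟩ : Q) (1 : k)) with hu
        set v := φ (s2 : AddMonoidAlgebra k Q) with hv
        have key : w * u = φ (AddMonoidAlgebra.single (⟨q + y, Q.add_mem hq hy⟩ : Q) c) := by
          rw [hw, hu, hφsingle, hφsingle, AddMonoidAlgebra.single_mul_single, mul_one]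
          congr 1
          refine Subtype.ext ?_
          show (a : Fin d → ℤ) + (f + y) = q + y
          rw [hval]; abel
        rw [← key, ← h2]
        ring
    · -- exists_of_eq
      intro x y hxy
      rw [halg] at hxy
      exact ⟨1, by rw [hφinj hxy]⟩
  exact ⟨(IsLocalization.algEquiv S (Localization S)
    (AddMonoidAlgebra k L)).toRingEquiv⟩

end
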